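/- arXiv:2408.07898 — 2 statements merged into one kernel-verified Lean document; each statement's English description precedes it below -/
import Mathlib

section
/- Any sequence of CNOT operations transforming the n×n identity into an invertible matrix M over F_2 contains at least e(M) − v(M) cut gates, where a cut gate is a CNOT step that increases the number of edge-connectivity components e, using that e(I)=n, each link gate decreases e by exactly 1, each cut gate increases e by exactly 1, and all other gates leave e unchanged, with exactly at least n − v(M) link gates forced. -/
open Matrix

variable {n : ℕ}

/-- Vertex-connectivity graph `G_v(M)`: edge between distinct `i, j` iff `M i j = 1` or `M j i = 1`. -/
def Gv (M : Matrix (Fin n) (Fin n) (ZMod 2)) : SimpleGraph (Fin n) :=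
  SimpleGraph.fromRel (fun i j => M i j = 1)

/-- `v(M)`: number of connected components of `G_v(M)`. -/
noncomputable def vcomp (M : Matrix (Fin n) (Fin n) (ZMod 2)) : ℕ :=
  Nat.card (Gv M).ConnectedComponent

/-- Edge-connectivity graph `G_e(M)`: `inl i` is row `R_i`, `inr j` is column `C_j`;
edge `R_i – C_j` iff `M i j = 1`. -/
def Ge (M : Matrix (Fin n) (Fin n) (ZMod 2)) : SimpleGraph (Fin n ⊕ Fin n) :=
  SimpleGraph.fromRel (fun x y => ∃ i j, x = Sum.inl i ∧ y = Sum.inr j ∧ M i j = 1)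

/-- `e(M)`: number of connected components of `G_e(M)`. -/
noncomputable def ecomp (M : Matrix (Fin n) (Fin n) (ZMod 2)) : ℕ :=
  Nat.card (Ge M).ConnectedComponent

/-- The result of the CNOT operation `CNOT(i,j)`: add row `i` of `M` to row `j` over `F_2`. -/
def cnotStep (M : Matrix (Fin n) (Fin n) (ZMod 2)) (i j : Fin n) :
    Matrix (Fin n) (Fin n) (ZMod 2) :=
  M.updateRow j (M i + M j)

/-- A river of `M`: a permutation `σ` with `M k (σ k) = 1` for all `k`. -/
def IsRiver (M : Matrix (Fin n) (Fin n) (ZMod 2)) (σ : Equiv.Perm (Fin n)) : Prop :=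
  ∀ k, M k (σ k) = 1

instance (M : Matrix (Fin n) (Fin n) (ZMod 2)) : DecidablePred (IsRiver M) := fun σ => by
  unfold IsRiver; exact Fintype.decidableForallFintype

/-- A CNOT gate matrix: `I + E_{j,i}` for `i ≠ j` (left-multiplication adds row `i` to row `j`). -/
def IsCNOT (E : Matrix (Fin n) (Fin n) (ZMod 2)) : Prop :=
  ∃ i j : Fin n, i ≠ j ∧ E = 1 + Matrix.single j i 1

/-- `s(M)`: the minimum number of CNOT gate matrices whose product is `M`. -/
noncomputable def synthSize (M : Matrix (Fin n) (Fin n) (ZMod 2)) : ℕ :=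
  sInf {k | ∃ L : List (Matrix (Fin n) (Fin n) (ZMod 2)),
    L.length = k ∧ (∀ E ∈ L, IsCNOT E) ∧ L.prod = M}

/-- The permutation matrix `P_σ` with `(P_σ)_{i, σ(i)} = 1`. -/
def Pmat (σ : Equiv.Perm (Fin n)) : Matrix (Fin n) (Fin n) (ZMod 2) :=
  Matrix.of fun i j => if σ i = j then 1 else 0

open SimpleGraph in

variable {V : Type*}

open SimpleGraph

lemma reachable_rec {G : SimpleGraph V} {R : V → V → Prop}
    (hrefl : ∀ x, R x x)
    (hadj : ∀ x y z, G.Adj x y → R y z → R x z) :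
    ∀ {x y}, G.Reachable x y → R x y := by
  intro x y hr
  refine hr.elim fun w => ?_
  induction w with
  | nil => exact hrefl _
  | cons ha p ih => exact hadj _ _ _ ha (ih p.reachable)

/-- star graph from `a` to `s` -/
def starG (a : V) (s : Set V) : SimpleGraph V :=
  SimpleGraph.fromRel (fun x y => x = a ∧ y ∈ s)

lemma star_reach (H : SimpleGraph V) (a : V) (s : Set V) (x y : V) :
    (H ⊔ starG a s).Reachable x y ↔
      H.Reachable x y ∨
        ((∃ w ∈ insert a s, H.Reachable x w) ∧ (∃ w ∈ insert a s, H.Reachable y w)) := by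
  constructor
  · refine reachable_rec (R := fun x y => H.Reachable x y ∨
        ((∃ w ∈ insert a s, H.Reachable x w) ∧ (∃ w ∈ insert a s, H.Reachable y w)))
      (fun z => Or.inl (Reachable.refl z)) ?_
    rintro p q r hpq hqr
    rcases hpq with hH | hS
    · rcases hqr with h | ⟨⟨w1, hw1, hr1⟩, hTy⟩
      · exact Or.inl (hH.reachable.trans h)
      · exact Or.inr ⟨⟨w1, hw1, hH.reachable.trans hr1⟩, hTy⟩
    · rw [starG, fromRel_adj] at hS
      obtain ⟨hne, hc⟩ := hS
      have hTp : ∃ w ∈ insert a s, H.Reachable p w := by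
        rcases hc with ⟨hp, _⟩ | ⟨_, hp⟩
        · exact ⟨p, by simp [hp], Reachable.refl p⟩
        · exact ⟨p, Set.mem_insert_iff.2 (Or.inr hp), Reachable.refl p⟩
      have hTq : ∃ w ∈ insert a s, H.Reachable q w := by
        rcases hc with ⟨_, hq⟩ | ⟨hq, _⟩
        · exact ⟨q, Set.mem_insert_iff.2 (Or.inr hq), Reachable.refl q⟩
        · exact ⟨q, by simp [hq], Reachable.refl q⟩
      rcases hqr with h | ⟨_, hTy⟩
      · refine Or.inr ⟨hTp, ?_⟩
        obtain ⟨w, hw, hrw⟩ := hTq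
        exact ⟨w, hw, h.symm.trans hrw⟩
      · exact Or.inr ⟨hTp, hTy⟩
  · rintro (h | ⟨⟨w1, hw1, hr1⟩, ⟨w2, hw2, hr2⟩⟩)
    · exact h.mono le_sup_left
    · have key : ∀ w ∈ insert a s, (H ⊔ starG a s).Reachable w a := by
        intro w hw
        rcases Set.mem_insert_iff.1 hw with h1 | h2
        · subst h1; exact Reachable.refl _
        · by_cases hwa : w = a
          · subst hwa; exact Reachable.refl _
          · refine Adj.reachable ?_
            refine le_sup_right (b := starG a s) ?_
            rw [starG, fromRel_adj]
            exact ⟨hwa, Or.inr ⟨rfl, h2⟩⟩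
      exact ((hr1.mono le_sup_left).trans ((key w1 hw1).trans
        ((key w2 hw2).symm.trans (hr2.mono le_sup_left).symm)))

lemma star_card [Fintype V] (H : SimpleGraph V) (a : V) (s : Set V) :
    Nat.card (H ⊔ starG a s).ConnectedComponent
      + (H.connectedComponentMk '' insert a s).ncard
      = Nat.card H.ConnectedComponent + 1 := by
  classical
  set G := H ⊔ starG a s with hG
  set T : Set H.ConnectedComponent := H.connectedComponentMk '' insert a s with hT
  set q : H.ConnectedComponent → G.ConnectedComponent :=
    ConnectedComponent.map (Hom.ofLE le_sup_left) with hq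
  have hqmk : ∀ v : V, q (H.connectedComponentMk v) = G.connectedComponentMk v :=
    fun v => rfl
  have hmemT : ∀ v : V, H.connectedComponentMk v ∈ T ↔
      ∃ w ∈ insert a s, H.Reachable v w := by
    intro v
    constructor
    · rintro ⟨w, hw, he⟩
      exact ⟨w, hw, (ConnectedComponent.eq.1 he).symm⟩
    · rintro ⟨w, hw, hr⟩
      exact ⟨w, hw, ConnectedComponent.eq.2 hr.symm⟩
  have hqeq : ∀ c d, q c = q d ↔ c = d ∨ (c ∈ T ∧ d ∈ T) := by
    refine ConnectedComponent.ind₂ ?_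
    intro x y
    rw [hqmk, hqmk, ConnectedComponent.eq, ConnectedComponent.eq, hmemT, hmemT, hG,
      star_reach]
  have hsurj : Function.Surjective q := by
    refine ConnectedComponent.ind ?_
    intro v
    exact ⟨H.connectedComponentMk v, hqmk v⟩
  have hc0T : H.connectedComponentMk a ∈ T := ⟨a, Set.mem_insert a s, rfl⟩
  set c0 := H.connectedComponentMk a with hc0
  have hinj : Set.InjOn q Tᶜ := by
    intro c hc d hd he
    rcases (hqeq c d).1 he with h | ⟨h1, _⟩
    · exact h
    · exact absurd h1 hc
  have hnotin : q c0 ∉ q '' Tᶜ := by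
    rintro ⟨c, hc, he⟩
    rcases (hqeq c c0).1 he with h | ⟨h1, _⟩
    · exact hc (h ▸ hc0T)
    · exact hc h1
  have huniv : (Set.univ : Set G.ConnectedComponent) = q '' Tᶜ ∪ {q c0} := by
    ext e
    simp only [Set.mem_univ, true_iff, Set.mem_union, Set.mem_singleton_iff]
    obtain ⟨c, rfl⟩ := hsurj e
    by_cases hc : c ∈ T
    · exact Or.inr ((hqeq c c0).2 (Or.inr ⟨hc, hc0T⟩))
    · exact Or.inl ⟨c, hc, rfl⟩
  have h1 : Nat.card G.ConnectedComponent = Tᶜ.ncard + 1 := by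
    rw [← Set.ncard_univ, huniv, Set.ncard_union_eq (by simpa using hnotin),
      Set.ncard_image_of_injOn hinj, Set.ncard_singleton]
  have h2 : T.ncard + Tᶜ.ncard = Nat.card H.ConnectedComponent :=
    Set.ncard_add_ncard_compl T
  omega


def HvG (M : Matrix (Fin n) (Fin n) (ZMod 2)) (j : Fin n) : SimpleGraph (Fin n) :=
  SimpleGraph.fromRel (fun x y => M x y = 1 ∧ x ≠ j)

def HeG (M : Matrix (Fin n) (Fin n) (ZMod 2)) (j : Fin n) : SimpleGraph (Fin n ⊕ Fin n) :=
  SimpleGraph.fromRel (fun x y => ∃ p q, x = Sum.inl p ∧ y = Sum.inr q ∧ M p q = 1 ∧ p ≠ j)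

def Sv (M : Matrix (Fin n) (Fin n) (ZMod 2)) (j : Fin n) : Set (Fin n) := {l | M j l = 1}

def Se (M : Matrix (Fin n) (Fin n) (ZMod 2)) (j : Fin n) : Set (Fin n ⊕ Fin n) :=
  {x | ∃ l, x = Sum.inr l ∧ M j l = 1}

lemma Gv_decomp (M : Matrix (Fin n) (Fin n) (ZMod 2)) (j : Fin n) :
    Gv M = HvG M j ⊔ starG j (Sv M j) := by
  ext x y
  simp only [Gv, HvG, starG, Sv, SimpleGraph.fromRel_adj, SimpleGraph.sup_adj,
    Set.mem_setOf_eq]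
  constructor
  · rintro ⟨hne, h | h⟩
    · by_cases hx : x = j
      · exact Or.inr ⟨hne, Or.inl ⟨hx, by rw [← hx]; exact h⟩⟩
      · exact Or.inl ⟨hne, Or.inl ⟨h, hx⟩⟩
    · by_cases hy : y = j
      · exact Or.inr ⟨hne, Or.inr ⟨hy, by rw [← hy]; exact h⟩⟩
      · exact Or.inl ⟨hne, Or.inr ⟨h, hy⟩⟩
  · rintro (⟨hne, ⟨h, -⟩ | ⟨h, -⟩⟩ | ⟨hne, ⟨hx, h⟩ | ⟨hy, h⟩⟩)
    · exact ⟨hne, Or.inl h⟩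
    · exact ⟨hne, Or.inr h⟩
    · exact ⟨hne, Or.inl (by rw [hx]; exact h)⟩
    · exact ⟨hne, Or.inr (by rw [hy]; exact h)⟩

lemma Ge_decomp (M : Matrix (Fin n) (Fin n) (ZMod 2)) (j : Fin n) :
    Ge M = HeG M j ⊔ starG (Sum.inl j) (Se M j) := by
  ext x y
  simp only [Ge, HeG, starG, Se, SimpleGraph.fromRel_adj, SimpleGraph.sup_adj,
    Set.mem_setOf_eq]
  constructor
  · rintro ⟨hne, ⟨p, q, hx, hy, h⟩ | ⟨p, q, hy, hx, h⟩⟩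
    · by_cases hp : p = j
      · exact Or.inr ⟨hne, Or.inl ⟨by rw [hx, hp], q, hy, by rw [← hp]; exact h⟩⟩
      · exact Or.inl ⟨hne, Or.inl ⟨p, q, hx, hy, h, hp⟩⟩
    · by_cases hp : p = j
      · exact Or.inr ⟨hne, Or.inr ⟨by rw [hy, hp], q, hx, by rw [← hp]; exact h⟩⟩
      · exact Or.inl ⟨hne, Or.inr ⟨p, q, hy, hx, h, hp⟩⟩
  · rintro (⟨hne, ⟨p, q, hx, hy, h, -⟩ | ⟨p, q, hy, hx, h, -⟩⟩ |
      ⟨hne, ⟨hx, l, hy, h⟩ | ⟨hy, l, hx, h⟩⟩)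
    · exact ⟨hne, Or.inl ⟨p, q, hx, hy, h⟩⟩
    · exact ⟨hne, Or.inr ⟨p, q, hy, hx, h⟩⟩
    · exact ⟨hne, Or.inl ⟨j, l, hx, hy, h⟩⟩
    · exact ⟨hne, Or.inr ⟨j, l, hy, hx, h⟩⟩

lemma HvG_cnot (M : Matrix (Fin n) (Fin n) (ZMod 2)) (i j : Fin n) :
    HvG (cnotStep M i j) j = HvG M j := by
  unfold HvG cnotStep
  congr 1
  funext x y
  by_cases hx : x = j
  · simp [hx]
  · simp [Matrix.updateRow_ne hx]

lemma HeG_cnot (M : Matrix (Fin n) (Fin n) (ZMod 2)) (i j : Fin n) :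
    HeG (cnotStep M i j) j = HeG M j := by
  unfold HeG cnotStep
  congr 1
  funext x y
  rw [eq_iff_iff]
  constructor
  · rintro ⟨p, q, rfl, rfl, h, hp⟩
    exact ⟨p, q, rfl, rfl, by rwa [Matrix.updateRow_ne hp] at h, hp⟩
  · rintro ⟨p, q, rfl, rfl, h, hp⟩
    exact ⟨p, q, rfl, rfl, by rwa [Matrix.updateRow_ne hp], hp⟩

lemma cnot_apply (M : Matrix (Fin n) (Fin n) (ZMod 2)) (i j l : Fin n) :
    cnotStep M i j j l = M i l + M j l := by
  simp [cnotStep]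

lemma cnot_invol (M : Matrix (Fin n) (Fin n) (ZMod 2)) (i j : Fin n) (hij : i ≠ j) :
    cnotStep (cnotStep M i j) i j = M := by
  ext x y
  by_cases hx : x = j
  · subst hx
    rw [cnot_apply, cnot_apply]
    have : cnotStep M i x i y = M i y := by
      unfold cnotStep
      rw [Matrix.updateRow_ne hij]
    rw [this, ← add_assoc, CharTwo.add_self_eq_zero, zero_add]
  · unfold cnotStep
    rw [Matrix.updateRow_ne hx, Matrix.updateRow_ne hx]


section Part3
variable {n : ℕ}
open SimpleGraph

lemma vcomp_id' (M : Matrix (Fin n) (Fin n) (ZMod 2)) (j : Fin n) :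
    vcomp M + ((HvG M j).connectedComponentMk '' insert j (Sv M j)).ncard
      = Nat.card (HvG M j).ConnectedComponent + 1 := by
  unfold vcomp
  rw [Gv_decomp M j]
  exact star_card (HvG M j) j (Sv M j)

lemma ecomp_id' (M : Matrix (Fin n) (Fin n) (ZMod 2)) (j : Fin n) :
    ecomp M + ((HeG M j).connectedComponentMk '' insert (Sum.inl j) (Se M j)).ncard
      = Nat.card (HeG M j).ConnectedComponent + 1 := by
  unfold ecomp
  rw [Ge_decomp M j]
  exact star_card (HeG M j) (Sum.inl j) (Se M j)

lemma zmod2_cases : ∀ a : ZMod 2, a = 0 ∨ a = 1 := by decide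

lemma Tv_mono (M : Matrix (Fin n) (Fin n) (ZMod 2)) (i j : Fin n) (hij : i ≠ j) :
    ((HvG M j).connectedComponentMk '' insert j (Sv (cnotStep M i j) j)) ⊆
      insert ((HvG M j).connectedComponentMk i)
        ((HvG M j).connectedComponentMk '' insert j (Sv M j)) := by
  rintro c ⟨l, hl, rfl⟩
  rcases Set.mem_insert_iff.1 hl with rfl | hl
  · exact Set.mem_insert_of_mem _ ⟨l, Set.mem_insert _ _, rfl⟩
  · have hN : cnotStep M i j j l = 1 := hl
    rw [cnot_apply] at hN
    rcases zmod2_cases (M j l) with h0 | h1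
    · have hi : M i l = 1 := by rwa [h0, add_zero] at hN
      by_cases hli : l = i
      · rw [hli]; exact Set.mem_insert _ _
      · have hadj : (HvG M j).Adj l i := by
          rw [HvG, SimpleGraph.fromRel_adj]
          exact ⟨hli, Or.inr ⟨hi, hij⟩⟩
        rw [show (HvG M j).connectedComponentMk l = (HvG M j).connectedComponentMk i from
          SimpleGraph.ConnectedComponent.eq.2 hadj.reachable]
        exact Set.mem_insert _ _
    · exact Set.mem_insert_of_mem _ ⟨l, Set.mem_insert_of_mem _ h1, rfl⟩

lemma Te_mono (M : Matrix (Fin n) (Fin n) (ZMod 2)) (i j : Fin n) (hij : i ≠ j) :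
    ((HeG M j).connectedComponentMk '' insert (Sum.inl j) (Se (cnotStep M i j) j)) ⊆
      insert ((HeG M j).connectedComponentMk (Sum.inl i))
        ((HeG M j).connectedComponentMk '' insert (Sum.inl j) (Se M j)) := by
  rintro c ⟨x, hx, rfl⟩
  rcases Set.mem_insert_iff.1 hx with rfl | hx
  · exact Set.mem_insert_of_mem _ ⟨Sum.inl j, Set.mem_insert _ _, rfl⟩
  · obtain ⟨l, rfl, hN⟩ := hx
    rw [cnot_apply] at hN
    rcases zmod2_cases (M j l) with h0 | h1
    · have hi : M i l = 1 := by rwa [h0, add_zero] at hN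
      have hadj : (HeG M j).Adj (Sum.inr l) (Sum.inl i) := by
        rw [HeG, SimpleGraph.fromRel_adj]
        exact ⟨by simp, Or.inr ⟨i, l, rfl, rfl, hi, hij⟩⟩
      rw [show (HeG M j).connectedComponentMk (Sum.inr l)
          = (HeG M j).connectedComponentMk (Sum.inl i) from
        SimpleGraph.ConnectedComponent.eq.2 hadj.reachable]
      exact Set.mem_insert _ _
    · exact Set.mem_insert_of_mem _ ⟨Sum.inr l, Set.mem_insert_of_mem _ ⟨l, rfl, h1⟩, rfl⟩

lemma He_to_Hv (M : Matrix (Fin n) (Fin n) (ZMod 2)) (j : Fin n) :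
    ∀ {x y}, (HeG M j).Reachable x y →
      (HvG M j).Reachable (Sum.elim id id x) (Sum.elim id id y) := by
  refine reachable_rec (R := fun x y =>
      (HvG M j).Reachable (Sum.elim id id x) (Sum.elim id id y))
    (fun x => Reachable.refl _) ?_
  rintro x y z hadj hyz
  refine Reachable.trans ?_ hyz
  rw [HeG, SimpleGraph.fromRel_adj] at hadj
  obtain ⟨hne, ⟨p, q, rfl, rfl, h, hp⟩ | ⟨p, q, rfl, rfl, h, hp⟩⟩ := hadj
  · by_cases hpq : p = q
    · simp only [Sum.elim_inl, Sum.elim_inr, id_eq, hpq]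
      exact Reachable.refl _
    · refine SimpleGraph.Adj.reachable ?_
      show (HvG M j).Adj p q
      rw [HvG, SimpleGraph.fromRel_adj]
      exact ⟨hpq, Or.inl ⟨h, hp⟩⟩
  · by_cases hpq : p = q
    · simp only [Sum.elim_inl, Sum.elim_inr, id_eq, hpq]
      exact Reachable.refl _
    · refine SimpleGraph.Adj.reachable ?_
      show (HvG M j).Adj q p
      rw [HvG, SimpleGraph.fromRel_adj]
      exact ⟨fun h' => hpq h'.symm, Or.inr ⟨h, hp⟩⟩

lemma ecomp_step (M : Matrix (Fin n) (Fin n) (ZMod 2)) (i j : Fin n) (hij : i ≠ j) :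
    ecomp M ≤ ecomp (cnotStep M i j) + 1 ∧ ecomp (cnotStep M i j) ≤ ecomp M + 1 := by
  have hH : HeG (cnotStep M i j) j = HeG M j := HeG_cnot M i j
  have e1 := ecomp_id' M j
  have e2 := ecomp_id' (cnotStep M i j) j
  rw [hH] at e2
  have s1 := Te_mono M i j hij
  have s2 := Te_mono (cnotStep M i j) i j hij
  rw [cnot_invol M i j hij, hH] at s2
  have c1 := le_trans (Set.ncard_le_ncard s1 (Set.toFinite _)) (Set.ncard_insert_le _ _)
  have c2 := le_trans (Set.ncard_le_ncard s2 (Set.toFinite _)) (Set.ncard_insert_le _ _)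
  omega

lemma vcomp_step (M : Matrix (Fin n) (Fin n) (ZMod 2)) (i j : Fin n) (hij : i ≠ j) :
    vcomp M ≤ vcomp (cnotStep M i j) + 1 := by
  have hH : HvG (cnotStep M i j) j = HvG M j := HvG_cnot M i j
  have v1 := vcomp_id' M j
  have v2 := vcomp_id' (cnotStep M i j) j
  rw [hH] at v2
  have s1 := Tv_mono M i j hij
  have c1 := le_trans (Set.ncard_le_ncard s1 (Set.toFinite _)) (Set.ncard_insert_le _ _)
  omega

lemma link_cut (M : Matrix (Fin n) (Fin n) (ZMod 2)) (i j : Fin n) (hij : i ≠ j)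
    (hv : vcomp (cnotStep M i j) < vcomp M) :
    ecomp (cnotStep M i j) + 1 = ecomp M := by
  classical
  have hHv : HvG (cnotStep M i j) j = HvG M j := HvG_cnot M i j
  have hHe : HeG (cnotStep M i j) j = HeG M j := HeG_cnot M i j
  have v1 := vcomp_id' M j
  have v2 := vcomp_id' (cnotStep M i j) j
  rw [hHv] at v2
  have e1 := ecomp_id' M j
  have e2 := ecomp_id' (cnotStep M i j) j
  rw [hHe] at e2
  set UM := (HvG M j).connectedComponentMk '' insert j (Sv M j) with hUM
  set UN := (HvG M j).connectedComponentMk '' insert j (Sv (cnotStep M i j) j) with hUN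
  set ci := (HvG M j).connectedComponentMk i with hci
  have sN : UN ⊆ insert ci UM := Tv_mono M i j hij
  have hUcard : UM.ncard < UN.ncard := by omega
  have hciUM : ci ∉ UM := by
    intro h
    have hsub : UN ⊆ UM := fun x hx =>
      (Set.mem_insert_iff.1 (sN hx)).elim (fun e => e ▸ h) id
    have := Set.ncard_le_ncard hsub (Set.toFinite _)
    omega
  have hciUN : ci ∈ UN := by
    by_contra h
    have hsub : UN ⊆ UM := fun x hx =>
      (Set.mem_insert_iff.1 (sN hx)).elim (fun e => absurd (e ▸ hx) h) id
    have := Set.ncard_le_ncard hsub (Set.toFinite _)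
    omega
  obtain ⟨l0, hl0, hml0⟩ := hciUN
  rcases Set.mem_insert_iff.1 hl0 with rfl | hl0s
  · exact absurd ⟨l0, Set.mem_insert _ _, hml0⟩ hciUM
  · have hN0 : cnotStep M i j j l0 = 1 := hl0s
    rw [cnot_apply] at hN0
    have hMj : M j l0 = 0 := by
      rcases zmod2_cases (M j l0) with h | h
      · exact h
      · exact absurd ⟨l0, Set.mem_insert_of_mem _ h, hml0⟩ hciUM
    have hMi : M i l0 = 1 := by rwa [hMj, add_zero] at hN0
    set ce := (HeG M j).connectedComponentMk (Sum.inl i) with hce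
    set TM := (HeG M j).connectedComponentMk '' insert (Sum.inl j) (Se M j) with hTM
    set TN := (HeG M j).connectedComponentMk '' insert (Sum.inl j) (Se (cnotStep M i j) j) with hTN'
    have sTN : TN ⊆ insert ce TM := Te_mono M i j hij
    have sTM : TM ⊆ insert ce TN := by
      have h := Te_mono (cnotStep M i j) i j hij
      rwa [cnot_invol M i j hij, hHe] at h
    have hceTN : ce ∈ TN := by
      refine ⟨Sum.inr l0, Set.mem_insert_of_mem _ ⟨l0, rfl, hl0s⟩, ?_⟩
      apply SimpleGraph.ConnectedComponent.eq.2
      refine SimpleGraph.Adj.reachable ?_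
      rw [HeG, SimpleGraph.fromRel_adj]
      exact ⟨by simp, Or.inr ⟨i, l0, rfl, rfl, hMi, hij⟩⟩
    have hceTM : ce ∉ TM := by
      rintro ⟨x, hx, hmk⟩
      have hreach : (HeG M j).Reachable x (Sum.inl i) :=
        SimpleGraph.ConnectedComponent.eq.1 hmk
      have hv' := He_to_Hv M j hreach
      rcases Set.mem_insert_iff.1 hx with rfl | ⟨l, rfl, hMl⟩
      · exact hciUM ⟨j, Set.mem_insert _ _,
          SimpleGraph.ConnectedComponent.eq.2 (by simpa using hv')⟩
      · exact hciUM ⟨l, Set.mem_insert_of_mem _ hMl,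
          SimpleGraph.ConnectedComponent.eq.2 (by simpa using hv')⟩
    have hTMsub : TM ⊆ TN := fun x hx =>
      (Set.mem_insert_iff.1 (sTM hx)).elim (fun e => absurd (e ▸ hx) hceTM) id
    have hTNeq : TN = insert ce TM :=
      Set.Subset.antisymm sTN (Set.insert_subset hceTN hTMsub)
    have hcard : TN.ncard = TM.ncard + 1 := by
      rw [hTNeq, Set.ncard_insert_of_notMem hceTM]
    omega

end Part3

section Part4
variable {n : ℕ}
open SimpleGraph

lemma vcomp_one : vcomp (1 : Matrix (Fin n) (Fin n) (ZMod 2)) = n := by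
  have hbot : Gv (1 : Matrix (Fin n) (Fin n) (ZMod 2)) = ⊥ := by
    ext x y
    simp only [Gv, SimpleGraph.fromRel_adj, SimpleGraph.bot_adj, iff_false, not_and]
    rintro hne (h | h)
    · rw [Matrix.one_apply_ne hne] at h
      exact zero_ne_one h
    · rw [Matrix.one_apply_ne (Ne.symm hne)] at h
      exact zero_ne_one h
  have hbij : Function.Bijective
      (fun v : Fin n => (Gv (1 : Matrix (Fin n) (Fin n) (ZMod 2))).connectedComponentMk v) := by
    constructor
    · intro x y hxy
      have := SimpleGraph.ConnectedComponent.eq.1 hxy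
      rw [hbot] at this
      exact SimpleGraph.reachable_bot.1 this
    · exact SimpleGraph.ConnectedComponent.ind fun v => ⟨v, rfl⟩
  have := Nat.card_eq_of_bijective _ hbij
  unfold vcomp
  rw [← this]
  simp

lemma ecomp_one : ecomp (1 : Matrix (Fin n) (Fin n) (ZMod 2)) = n := by
  have hinv : ∀ {x y}, (Ge (1 : Matrix (Fin n) (Fin n) (ZMod 2))).Reachable x y →
      Sum.elim id id x = Sum.elim id id y := by
    refine reachable_rec (R := fun x y => Sum.elim id id x = Sum.elim id id y)
      (fun _ => rfl) ?_
    rintro x y z hadj hyz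
    rw [← hyz]
    rw [Ge, SimpleGraph.fromRel_adj] at hadj
    obtain ⟨hne, ⟨p, q, rfl, rfl, h⟩ | ⟨p, q, rfl, rfl, h⟩⟩ := hadj
    · have hpq : p = q := by
        by_contra hpq
        rw [Matrix.one_apply_ne hpq] at h
        exact zero_ne_one h
      simp [hpq]
    · have hpq : p = q := by
        by_contra hpq
        rw [Matrix.one_apply_ne hpq] at h
        exact zero_ne_one h
      simp [hpq]
  have hbij : Function.Bijective
      (fun p : Fin n =>
        (Ge (1 : Matrix (Fin n) (Fin n) (ZMod 2))).connectedComponentMk (Sum.inl p)) := by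
    constructor
    · intro x y hxy
      have := hinv (SimpleGraph.ConnectedComponent.eq.1 hxy)
      simpa using this
    · refine SimpleGraph.ConnectedComponent.ind ?_
      rintro (p | p)
      · exact ⟨p, rfl⟩
      · refine ⟨p, ?_⟩
        apply SimpleGraph.ConnectedComponent.eq.2
        refine SimpleGraph.Adj.reachable ?_
        rw [Ge, SimpleGraph.fromRel_adj]
        exact ⟨by simp, Or.inl ⟨p, p, rfl, rfl, Matrix.one_apply_eq p⟩⟩
  have := Nat.card_eq_of_bijective _ hbij
  unfold ecomp
  rw [← this]
  simp

end Part4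

/-- Any sequence of CNOT operations taking `I` to `M` contains at least `e(M) - v(M)` cut gates. -/
theorem stmt11 (n k : ℕ) (M : Matrix (Fin n) (Fin n) (ZMod 2)) (hM : IsUnit M)
    (f : ℕ → Matrix (Fin n) (Fin n) (ZMod 2)) (h0 : f 0 = 1) (hk : f k = M)
    (hstep : ∀ t < k, ∃ i j : Fin n, i ≠ j ∧ f (t + 1) = cnotStep (f t) i j) :
    ecomp M - vcomp M ≤
      ((Finset.range k).filter (fun t => ecomp (f (t + 1)) = ecomp (f t) + 1)).card := by
  classical
  have key : ∀ t, t < k →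
      (ecomp (f t) ≤ ecomp (f (t + 1)) + 1 ∧ ecomp (f (t + 1)) ≤ ecomp (f t) + 1) ∧
      vcomp (f t) ≤ vcomp (f (t + 1)) + 1 ∧
      (vcomp (f (t + 1)) < vcomp (f t) → ecomp (f (t + 1)) + 1 = ecomp (f t)) := by
    intro t ht
    obtain ⟨i, j, hij, hf⟩ := hstep t ht
    rw [hf]
    exact ⟨ecomp_step _ i j hij, vcomp_step _ i j hij, link_cut _ i j hij⟩
  rw [← hk]
  set C := (Finset.range k).filter (fun t => ecomp (f (t + 1)) = ecomp (f t) + 1) with hC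
  set D := (Finset.range k).filter (fun t => ecomp (f (t + 1)) < ecomp (f t)) with hD
  set L := (Finset.range k).filter (fun t => vcomp (f (t + 1)) < vcomp (f t)) with hL
  have hLD : L ⊆ D := by
    intro t ht
    rw [hL, Finset.mem_filter, Finset.mem_range] at ht
    rw [hD, Finset.mem_filter, Finset.mem_range]
    refine ⟨ht.1, ?_⟩
    have := (key t ht.1).2.2 ht.2
    omega
  have hLD' : L.card ≤ D.card := Finset.card_le_card hLD
  have tele1 : (ecomp (f k) : ℤ) - ecomp (f 0) = (C.card : ℤ) - D.card := by
    rw [← Finset.sum_range_sub (fun t => (ecomp (f t) : ℤ)) k]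
    have hterm : ∀ t ∈ Finset.range k,
        (ecomp (f (t + 1)) : ℤ) - ecomp (f t) =
          (if ecomp (f (t + 1)) = ecomp (f t) + 1 then (1 : ℤ) else 0)
            - (if ecomp (f (t + 1)) < ecomp (f t) then (1 : ℤ) else 0) := by
      intro t ht
      rw [Finset.mem_range] at ht
      have h1 := ((key t ht).1).1
      have h2 := ((key t ht).1).2
      by_cases hc : ecomp (f (t + 1)) = ecomp (f t) + 1 <;>
        by_cases hd : ecomp (f (t + 1)) < ecomp (f t) <;>
        simp only [hc, hd, if_true, if_false] <;> omega
    rw [Finset.sum_congr rfl hterm, Finset.sum_sub_distrib,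
      Finset.sum_boole, Finset.sum_boole, hC, hD]
  have tele2 : -(L.card : ℤ) ≤ (vcomp (f k) : ℤ) - vcomp (f 0) := by
    rw [← Finset.sum_range_sub (fun t => (vcomp (f t) : ℤ)) k]
    have hb : ∀ t ∈ Finset.range k,
        -(if vcomp (f (t + 1)) < vcomp (f t) then (1 : ℤ) else 0) ≤
          (vcomp (f (t + 1)) : ℤ) - vcomp (f t) := by
      intro t ht
      rw [Finset.mem_range] at ht
      have := (key t ht).2.1
      by_cases hd : vcomp (f (t + 1)) < vcomp (f t) <;>
        simp only [hd, if_true, if_false] <;> omega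
    calc -(L.card : ℤ)
        = ∑ t ∈ Finset.range k,
            -(if vcomp (f (t + 1)) < vcomp (f t) then (1 : ℤ) else 0) := by
          rw [Finset.sum_neg_distrib, Finset.sum_boole, hL]
      _ ≤ _ := Finset.sum_le_sum hb
  have he0 : ecomp (f 0) = n := by rw [h0]; exact ecomp_one
  have hv0 : vcomp (f 0) = n := by rw [h0]; exact vcomp_one
  omega
end

section
/- Let M be an invertible n×n matrix over F_2 such that G_v(M) is connected (v(M)=1). Then s(M) ≥ n−1, i.e., M cannot be written as a product of fewer than n−1 CNOT gate matrices. -/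
open Matrix

variable {n : ℕ}

section MyAux
open SimpleGraph



section Aux

variable {V : Type*}

/-- Transfer reachability along an edgewise-reachability map. -/
lemma reach_of_adj_reach {G H : SimpleGraph V}
    (h : ∀ a b, G.Adj a b → H.Reachable a b) {a b : V} (hr : G.Reachable a b) :
    H.Reachable a b := by
  obtain ⟨w⟩ := hr
  induction w with
  | nil => exact Reachable.refl _
  | cons ha p ih => exact (h _ _ ha).trans ih

lemma reach_sup_edge {G : SimpleGraph V} {s t a b : V}
    (h : (G ⊔ SimpleGraph.edge s t).Reachable a b) :
    G.Reachable a b ∨ (G.Reachable a s ∧ G.Reachable t b) ∨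
      (G.Reachable a t ∧ G.Reachable s b) := by
  obtain ⟨w⟩ := h
  induction w with
  | nil => exact Or.inl (Reachable.refl _)
  | @cons a c b ha p ih =>
    rcases ha with hG | hE
    · rcases ih with h1 | ⟨h1, h2⟩ | ⟨h1, h2⟩
      · exact Or.inl (hG.reachable.trans h1)
      · exact Or.inr (Or.inl ⟨hG.reachable.trans h1, h2⟩)
      · exact Or.inr (Or.inr ⟨hG.reachable.trans h1, h2⟩)
    · rw [edge_adj] at hE
      rcases hE.1 with ⟨rfl, rfl⟩ | ⟨rfl, rfl⟩
      · rcases ih with h1 | ⟨h1, h2⟩ | ⟨h1, h2⟩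
        · exact Or.inr (Or.inl ⟨Reachable.refl _, h1⟩)
        · exact Or.inr (Or.inl ⟨Reachable.refl _, h2⟩)
        · exact Or.inl h2
      · rcases ih with h1 | ⟨h1, h2⟩ | ⟨h1, h2⟩
        · exact Or.inr (Or.inr ⟨Reachable.refl _, h1⟩)
        · exact Or.inl h2
        · exact Or.inr (Or.inr ⟨Reachable.refl _, h2⟩)

lemma card_cc_le_sup_edge [Finite V] (G : SimpleGraph V) (s t : V) :
    Nat.card G.ConnectedComponent ≤
      Nat.card (G ⊔ SimpleGraph.edge s t).ConnectedComponent + 1 := by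
  set H := G ⊔ SimpleGraph.edge s t with hH
  classical
  let f : G.ConnectedComponent → H.ConnectedComponent := fun c =>
    c.lift (fun v => H.connectedComponentMk v)
      (fun v w p _ => SimpleGraph.ConnectedComponent.sound (p.reachable.mono le_sup_left))
  let F : G.ConnectedComponent → H.ConnectedComponent ⊕ Unit := fun c =>
    if c = G.connectedComponentMk s then Sum.inr () else Sum.inl (f c)
  have hinj : Function.Injective F := by
    intro c c' hcc
    by_cases h1 : c = G.connectedComponentMk s <;>
      by_cases h2 : c' = G.connectedComponentMk s
    · exact h1.trans h2.symm
    · simp only [F, if_pos h1, if_neg h2] at hcc; exact absurd hcc.symm (by simp)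
    · simp only [F, if_neg h1, if_pos h2] at hcc; exact absurd hcc (by simp)
    · simp only [F, if_neg h1, if_neg h2, Sum.inl.injEq] at hcc
      obtain ⟨a, rfl⟩ := Quot.exists_rep c
      obtain ⟨b, rfl⟩ := Quot.exists_rep c'
      have hre : H.Reachable a b := by
        have h3 : H.connectedComponentMk a = H.connectedComponentMk b := hcc
        exact SimpleGraph.ConnectedComponent.eq.mp h3
      rcases reach_sup_edge hre with hr | ⟨hr, _⟩ | ⟨_, hr⟩
      · exact SimpleGraph.ConnectedComponent.sound hr
      · exact absurd (SimpleGraph.ConnectedComponent.sound hr) h1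
      · exact absurd (SimpleGraph.ConnectedComponent.sound hr.symm) h2
  calc Nat.card G.ConnectedComponent
      ≤ Nat.card (H.ConnectedComponent ⊕ Unit) := Nat.card_le_card_of_injective F hinj
    _ = Nat.card H.ConnectedComponent + 1 := by
        rw [Nat.card_sum]; simp

end Aux

lemma zmod2_add_eq_one {x y : ZMod 2} (h : x + y = 1) : x = 1 ∨ y = 1 := by
  revert h; revert x y; decide

lemma zmod2_ne_zero {x : ZMod 2} (h : x ≠ 0) : x = 1 := by
  revert h; revert x; decide

lemma cnot_mul_apply (A : Matrix (Fin n) (Fin n) (ZMod 2)) (i j a b : Fin n) :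
    ((1 + Matrix.single j i (1 : ZMod 2)) * A) a b
      = A a b + if a = j then A i b else 0 := by
  rw [add_mul, one_mul]
  simp [Matrix.mul_apply, Matrix.single, ite_and, eq_comm]

lemma gv_adj (M : Matrix (Fin n) (Fin n) (ZMod 2)) (a b : Fin n) :
    (Gv M).Adj a b ↔ a ≠ b ∧ (M a b = 1 ∨ M b a = 1) := by
  simp [Gv]

lemma cnot_edge_reach (A : Matrix (Fin n) (Fin n) (ZMod 2)) {i j : Fin n} (hij : i ≠ j)
    {a b : Fin n} (hab : a ≠ b)
    (h : ((1 + Matrix.single j i (1 : ZMod 2)) * A) a b = 1) :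
    (Gv A ⊔ SimpleGraph.edge i j).Reachable a b := by
  rw [cnot_mul_apply] at h
  have hji : (Gv A ⊔ SimpleGraph.edge i j).Adj j i := by
    refine Or.inr ?_
    rw [edge_adj]
    exact ⟨Or.inr ⟨rfl, rfl⟩, hij.symm⟩
  by_cases haj : a = j
  · rw [if_pos haj] at h
    have hji' : (Gv A ⊔ SimpleGraph.edge i j).Adj a i := haj ▸ hji
    rcases zmod2_add_eq_one h with h1 | h1
    · exact (SimpleGraph.Adj.reachable (Or.inl ((gv_adj A a b).mpr ⟨hab, Or.inl h1⟩)))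
    · by_cases hbi : b = i
      · exact hbi ▸ hji'.reachable
      · have h2 : (Gv A ⊔ SimpleGraph.edge i j).Adj i b :=
          Or.inl ((gv_adj A i b).mpr ⟨fun hx => hbi hx.symm, Or.inl h1⟩)
        exact hji'.reachable.trans h2.reachable
  · rw [if_neg haj, add_zero] at h
    exact (SimpleGraph.Adj.reachable (Or.inl ((gv_adj A a b).mpr ⟨hab, Or.inl h⟩)))

lemma cnot_step_card (A : Matrix (Fin n) (Fin n) (ZMod 2)) {i j : Fin n} (hij : i ≠ j) :
    Nat.card (Gv A).ConnectedComponent ≤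
      Nat.card (Gv ((1 + Matrix.single j i (1 : ZMod 2)) * A)).ConnectedComponent + 1 := by
  set E := (1 : Matrix (Fin n) (Fin n) (ZMod 2)) + Matrix.single j i (1 : ZMod 2) with hE
  set K := Gv A ⊔ SimpleGraph.edge i j with hK
  have hadj : ∀ a b, (Gv (E * A)).Adj a b → K.Reachable a b := by
    intro a b hab
    rcases (gv_adj _ a b).mp hab with ⟨hne, h1 | h1⟩
    · exact cnot_edge_reach A hij hne h1
    · exact (cnot_edge_reach A hij (Ne.symm hne) h1).symm
  let φ : (Gv (E * A)).ConnectedComponent → K.ConnectedComponent := fun c =>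
    c.lift (fun v => K.connectedComponentMk v)
      (fun v w p _ => SimpleGraph.ConnectedComponent.sound
        (reach_of_adj_reach hadj p.reachable))
  have hsurj : Function.Surjective φ := by
    intro c
    obtain ⟨v, rfl⟩ := Quot.exists_rep c
    exact ⟨(Gv (E * A)).connectedComponentMk v, rfl⟩
  have h2 : Nat.card K.ConnectedComponent ≤ Nat.card (Gv (E * A)).ConnectedComponent :=
    Nat.card_le_card_of_surjective φ hsurj
  have h1 := card_cc_le_sup_edge (Gv A) i j
  rw [← hK] at h1
  omega

lemma gv_one : Gv (1 : Matrix (Fin n) (Fin n) (ZMod 2)) = ⊥ := by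
  ext a b
  simp only [gv_adj, SimpleGraph.bot_adj, iff_false]
  rintro ⟨hne, h | h⟩
  · rw [Matrix.one_apply_ne hne] at h; exact one_ne_zero h.symm
  · rw [Matrix.one_apply_ne (Ne.symm hne)] at h; exact one_ne_zero h.symm

lemma card_cc_bot : Nat.card (⊥ : SimpleGraph (Fin n)).ConnectedComponent = n := by
  have hbij : Function.Bijective (⊥ : SimpleGraph (Fin n)).connectedComponentMk := by
    constructor
    · intro a b hab
      exact SimpleGraph.reachable_bot.mp (SimpleGraph.ConnectedComponent.eq.mp hab)
    · intro c; obtain ⟨v, rfl⟩ := Quot.exists_rep c; exact ⟨v, rfl⟩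
  rw [← Nat.card_congr (Equiv.ofBijective _ hbij)]
  simp

lemma exists_cnot_list (M : Matrix (Fin n) (Fin n) (ZMod 2)) (hM : IsUnit M) :
    ∃ L : List (Matrix (Fin n) (Fin n) (ZMod 2)),
      (∀ E ∈ L, IsCNOT E) ∧ L.prod = M := by
  have hdet : M.det ≠ 0 := by
    have h1 : IsUnit M.det := (Matrix.isUnit_iff_isUnit_det M).mp hM
    exact h1.ne_zero
  apply Matrix.diagonal_transvection_induction_of_det_ne_zero
    (P := fun N => ∃ L : List (Matrix (Fin n) (Fin n) (ZMod 2)),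
      (∀ E ∈ L, IsCNOT E) ∧ L.prod = N) M hdet
  · intro D hD
    refine ⟨[], by simp, ?_⟩
    have hD1 : ∀ k, D k = 1 := by
      intro k
      apply zmod2_ne_zero
      rw [Matrix.det_diagonal] at hD
      exact Finset.prod_ne_zero_iff.mp hD k (Finset.mem_univ k)
    have : D = fun _ => 1 := funext hD1
    rw [List.prod_nil, this, Matrix.diagonal_one]
  · intro t
    by_cases hc : t.c = 0
    · exact ⟨[], by simp, by simp [Matrix.TransvectionStruct.toMatrix, hc]⟩
    · have hc1 : t.c = 1 := zmod2_ne_zero hc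
      refine ⟨[t.toMatrix], ?_, by simp⟩
      intro E hE
      rw [List.mem_singleton] at hE
      subst hE
      exact ⟨t.j, t.i, t.hij.symm, by
        simp [Matrix.TransvectionStruct.toMatrix, Matrix.transvection, hc1]⟩
  · rintro A B _ _ ⟨L1, h1, p1⟩ ⟨L2, h2, p2⟩
    refine ⟨L1 ++ L2, ?_, by rw [List.prod_append, p1, p2]⟩
    intro E hE
    rcases List.mem_append.mp hE with h | h
    · exact h1 E h
    · exact h2 E h

lemma key_bound (L : List (Matrix (Fin n) (Fin n) (ZMod 2)))
    (hL : ∀ E ∈ L, IsCNOT E) :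
    n ≤ Nat.card (Gv L.prod).ConnectedComponent + L.length := by
  induction L with
  | nil => rw [List.prod_nil, gv_one, card_cc_bot]; simp
  | cons E L ih =>
    obtain ⟨i, j, hij, rfl⟩ := hL E (List.mem_cons_self)
    have ih' := ih (fun E hE => hL E (List.mem_cons_of_mem _ hE))
    have hstep := cnot_step_card L.prod hij
    rw [List.prod_cons, List.length_cons]
    omega

end MyAux

/-- If `G_v(M)` is connected (`v(M) = 1`), then `s(M) ≥ n - 1`. -/
theorem stmt18 (n : ℕ) (M : Matrix (Fin n) (Fin n) (ZMod 2)) (hM : IsUnit M)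
    (hconn : vcomp M = 1) :
    n - 1 ≤ synthSize M := by
  obtain ⟨L0, hL0, hP0⟩ := exists_cnot_list M hM
  have hne : {k | ∃ L : List (Matrix (Fin n) (Fin n) (ZMod 2)),
      L.length = k ∧ (∀ E ∈ L, IsCNOT E) ∧ L.prod = M}.Nonempty :=
    ⟨L0.length, L0, rfl, hL0, hP0⟩
  obtain ⟨L, hlen, hcnot, hprod⟩ := Nat.sInf_mem hne
  have hkey := key_bound L hcnot
  rw [hprod] at hkey
  have hv : Nat.card (Gv M).ConnectedComponent = 1 := hconn
  unfold synthSize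
  rw [← hlen]
  omega
end
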